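/- Let 1 ≤ k2, k1 = t1 with t1 ≤ min(n1, m), t2 = m with k2 ≤ t2 ≤ n2, and m < t1·t2. Let g1 ∈ L^{n1} with wt_R(g1) = t1 and g2 ∈ L^{n2} with wt_R(g2) = t2 = m, and set G1 = Moore(g1, k1), G2 = Moore(g2, k2). Then the minimum rank distance of the row space of the Kronecker product G1 ⊗ G2 (the extended Gabidulin–Kronecker product code) equals t2 − k2 + 1 = m − k2 + 1; that is, every nonzero codeword has rank weight at least m − k2 + 1, and some nonzero codeword has rank weight exactly m − k2 + 1. -/

import Mathlib

open Matrix Kronecker Polynomial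

/-- Rank weight of a vector over the extension `L` of the base field `K`. -/
noncomputable def rankWeight (K : Type*) {L : Type*} [Field K] [Field L] [Algebra K L]
    {ι : Type*} (v : ι → L) : ℕ :=
  Module.finrank K (Submodule.span K (Set.range v))

/-- The `k × n` Moore matrix of `g`: entry `(i, j)` is `g j ^ q ^ i`. -/
def moore (q : ℕ) {L : Type*} [Field L] {n : ℕ} (g : Fin n → L) (k : ℕ) :
    Matrix (Fin k) (Fin n) L :=
  Matrix.of fun i j => g j ^ q ^ (i : ℕ)

section aux
variable {K L : Type*} [Field K] [Fintype K] [Field L] [Algebra K L]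

lemma frob_add (a b : L) (i : ℕ) :
    (a + b) ^ (Fintype.card K) ^ i = a ^ (Fintype.card K) ^ i + b ^ (Fintype.card K) ^ i := by
  obtain ⟨p, hp⟩ := CharP.exists K
  haveI : CharP K p := hp
  obtain ⟨n, hpp, hcard⟩ := FiniteField.card K p
  haveI : CharP L p := charP_of_injective_algebraMap (algebraMap K L).injective p
  haveI : ExpChar L p := ExpChar.prime hpp
  simp only [hcard, ← pow_mul]
  exact add_pow_expChar_pow ..

noncomputable def qlin {k : ℕ} (y : Fin k → L) : L →ₗ[K] L where
  toFun z := ∑ i, y i * z ^ (Fintype.card K) ^ (i : ℕ)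
  map_add' a b := by
    simp only [frob_add, mul_add]
    rw [Finset.sum_add_distrib]
  map_smul' a z := by
    simp only [Algebra.smul_def, mul_pow, ← map_pow, FiniteField.pow_card_pow,
      RingHom.id_apply, Finset.mul_sum]
    exact Finset.sum_congr rfl fun i _ => by ring

lemma qlin_apply {k : ℕ} (y : Fin k → L) (z : L) :
    qlin (K := K) y z = ∑ i, y i * z ^ (Fintype.card K) ^ (i : ℕ) := rfl

lemma qlin_ker_le [FiniteDimensional K L] {k : ℕ} {y : Fin k → L} (hy : y ≠ 0) :
    Module.finrank K (LinearMap.ker (qlin (K := K) y)) ≤ k - 1 := by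
  classical
  haveI : Finite L := Module.finite_of_finite K
  haveI : Fintype L := Fintype.ofFinite L
  set q := Fintype.card K with hq
  have hq2 : 2 ≤ q := Fintype.one_lt_card
  set P : L[X] := ∑ i : Fin k, C (y i) * X ^ (q ^ (i : ℕ)) with hP
  obtain ⟨i0, hi0'⟩ := Function.ne_iff.mp hy
  have hi0 : y i0 ≠ 0 := by simpa using hi0'
  have hcoeff : P.coeff (q ^ (i0 : ℕ)) = y i0 := by
    rw [hP, Polynomial.finset_sum_coeff]
    rw [Finset.sum_eq_single i0]
    · simp
    · intro i _ hne
      have : q ^ (i : ℕ) ≠ q ^ (i0 : ℕ) := fun h =>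
        hne (Fin.ext (Nat.pow_right_injective hq2 h))
      simp [coeff_X_pow, this.symm]
    · simp
  have hPne : P ≠ 0 := fun h => hi0 (by rw [← hcoeff, h, Polynomial.coeff_zero])
  have hdeg : P.natDegree ≤ q ^ (k - 1) := by
    apply Polynomial.natDegree_sum_le_of_forall_le
    intro i _
    refine le_trans (Polynomial.natDegree_C_mul_le _ _) ?_
    refine le_trans (Polynomial.natDegree_X_pow_le _) ?_
    exact Nat.pow_le_pow_right (by omega) (by omega)
  have heval : ∀ z : L, P.eval z = qlin (K := K) y z := by
    intro z
    rw [hP, qlin_apply, Polynomial.eval_finset_sum]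
    simp [hq]
  -- kernel injects into roots
  have hcard : Fintype.card (LinearMap.ker (qlin (K := K) y)) ≤ q ^ (k - 1) := by
    have hinj : Function.Injective
        (fun z : LinearMap.ker (qlin (K := K) y) =>
          (⟨(z : L), by
            rw [Multiset.mem_toFinset, Polynomial.mem_roots hPne, Polynomial.IsRoot.def,
              heval]
            exact z.2⟩ : P.roots.toFinset)) := by
      intro a b hab
      exact Subtype.ext (by simpa using hab)
    calc Fintype.card (LinearMap.ker (qlin (K := K) y))
        ≤ Fintype.card P.roots.toFinset := Fintype.card_le_of_injective _ hinj
      _ = P.roots.toFinset.card := Fintype.card_coe _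
      _ ≤ Multiset.card P.roots := Multiset.toFinset_card_le _
      _ ≤ P.natDegree := Polynomial.card_roots' P
      _ ≤ q ^ (k - 1) := hdeg
  have hcard' : Fintype.card (LinearMap.ker (qlin (K := K) y)) =
      q ^ Module.finrank K (LinearMap.ker (qlin (K := K) y)) := Module.card_eq_pow_finrank
  rw [hcard'] at hcard
  exact (Nat.pow_le_pow_iff_right hq2).mp hcard

lemma exists_qlin_vanish [FiniteDimensional K L] {k r : ℕ} (hrk : r < k) (u : Fin r → L) :
    ∃ y : Fin k → L, y ≠ 0 ∧ ∀ s, qlin (K := K) y (u s) = 0 := by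
  classical
  let M : Matrix (Fin k) (Fin r) L := Matrix.of fun i s => (u s) ^ (Fintype.card K) ^ (i : ℕ)
  have hlt : Module.finrank L (Fin r → L) < Module.finrank L (Fin k → L) := by
    simpa using hrk
  have := LinearMap.ker_ne_bot_of_finrank_lt (f := M.vecMulLinear) hlt
  obtain ⟨y, hy, hyne⟩ := Submodule.exists_mem_ne_zero_of_ne_bot this
  refine ⟨y, hyne, fun s => ?_⟩
  have : (y ᵥ* M) s = 0 := by
    rw [← M.vecMulLinear_apply y, LinearMap.mem_ker.mp hy]
    rfl
  rw [qlin_apply, ← this]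
  simp [Matrix.vecMul, dotProduct, M]

end aux

theorem egk_min_rank_distance_case1
    (q m n1 k1 n2 k2 t1 t2 : ℕ)
    (K L : Type*) [Field K] [Fintype K] [Field L] [Algebra K L]
    (hq : Fintype.card K = q) (hm : Module.finrank K L = m)
    (hk2pos : 1 ≤ k2) (hk1t1 : k1 = t1) (ht1 : t1 ≤ min n1 m)
    (ht2m : t2 = m) (hk2t2 : k2 ≤ t2) (ht2n2 : t2 ≤ n2) (hmt : m < t1 * t2)
    (g1 : Fin n1 → L) (hg1 : rankWeight K g1 = t1)
    (g2 : Fin n2 → L) (hg2 : rankWeight K g2 = t2) :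
    (∀ c : Fin n1 × Fin n2 → L,
      (∃ x : Fin k1 × Fin k2 → L, c = x ᵥ* (moore q g1 k1 ⊗ₖ moore q g2 k2)) →
      c ≠ 0 → t2 - k2 + 1 ≤ rankWeight K c) ∧
    ∃ c : Fin n1 × Fin n2 → L,
      (∃ x : Fin k1 × Fin k2 → L, c = x ᵥ* (moore q g1 k1 ⊗ₖ moore q g2 k2)) ∧
      c ≠ 0 ∧ rankWeight K c = t2 - k2 + 1 := by
  subst hq
  have hk1t1' := hk1t1.symm
  subst hk1t1'
  have ht2m' := ht2m.symm
  subst ht2m'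
  have hm1 : 0 < m := Nat.pos_of_ne_zero fun h => by simp [h] at hmt
  have ht1pos : 0 < t1 := Nat.pos_of_ne_zero fun h => by simp [h] at hmt
  haveI : FiniteDimensional K L := FiniteDimensional.of_finrank_pos (by rw [hm]; exact hm1)
  have hk2m : k2 ≤ m := hk2t2
  have hg2' : Module.finrank K (Submodule.span K (Set.range g2)) = m := hg2
  have hg1' : Module.finrank K (Submodule.span K (Set.range g1)) = t1 := hg1
  have hspan2 : Submodule.span K (Set.range g2) = ⊤ := by
    apply Submodule.eq_top_of_finrank_eq
    rw [hm]; exact hg2'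
  constructor
  · -- lower bound
    rintro c ⟨x, hc⟩ hc0
    obtain ⟨⟨j1, j2⟩, hcj'⟩ := Function.ne_iff.mp hc0
    have hcj : c (j1, j2) ≠ 0 := by simpa using hcj'
    set y : Fin k2 → L := fun i2 => ∑ i1, x (i1, i2) * g1 j1 ^ (Fintype.card K) ^ (i1 : ℕ)
      with hy
    have key : ∀ j2' : Fin n2, c (j1, j2') = qlin (K := K) y (g2 j2') := by
      intro j2'
      rw [hc, qlin_apply]
      simp only [Matrix.vecMul, dotProduct, Fintype.sum_prod_type,
        Matrix.kroneckerMap_apply, moore, Matrix.of_apply, hy]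
      rw [Finset.sum_comm]
      refine Finset.sum_congr rfl fun i2 _ => ?_
      rw [Finset.sum_mul]
      exact Finset.sum_congr rfl fun i1 _ => by ring
    have hyne : y ≠ 0 := by
      intro h
      apply hcj
      rw [key j2, h]
      simp [qlin_apply]
    have hker := qlin_ker_le (K := K) hyne
    have hrn := LinearMap.finrank_range_add_finrank_ker (qlin (K := K) y)
    rw [hm] at hrn
    have hrange_le : LinearMap.range (qlin (K := K) y)
        ≤ Submodule.span K (Set.range c) := by
      rw [← Submodule.map_top, ← hspan2, Submodule.map_span]
      rw [Submodule.span_le]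
      rintro _ ⟨_, ⟨j2', rfl⟩, rfl⟩
      exact Submodule.subset_span ⟨(j1, j2'), key j2'⟩
    have hmono := Submodule.finrank_mono hrange_le
    unfold rankWeight
    omega
  · -- upper bound construction
    obtain ⟨t1', rfl⟩ : ∃ t', t1 = t' + 1 := ⟨t1 - 1, by omega⟩
    have hS1 : Module.finrank K (Submodule.span K (Set.range g1)) = t1' + 1 := hg1'
    let B := Module.finBasisOfFinrankEq K (Submodule.span K (Set.range g1)) hS1
    set b : Fin (t1' + 1) → L := fun s => (B s : L) with hbdef
    have hbli : LinearIndependent K b :=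
      B.linearIndependent.map' (Submodule.span K (Set.range g1)).subtype
        (Submodule.ker_subtype _)
    obtain ⟨y1, hy1ne, hy1van⟩ := exists_qlin_vanish (K := K)
      (show t1' < t1' + 1 by omega)
      (fun s : Fin t1' => b s.succ)
    have hvan : ∀ s : Fin (t1' + 1), s ≠ 0 → qlin (K := K) y1 (b s) = 0 := by
      intro s hs
      have h2 := hy1van (s.pred hs)
      rw [Fin.succ_pred] at h2
      exact h2
    have hb0 : qlin (K := K) y1 (b 0) ≠ 0 := by
      intro h0
      have hall : ∀ s : Fin (t1' + 1), b s ∈ LinearMap.ker (qlin (K := K) y1) := by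
        intro s
        rcases eq_or_ne s 0 with rfl | hs
        · exact LinearMap.mem_ker.mpr h0
        · exact LinearMap.mem_ker.mpr (hvan s hs)
      have hle : Submodule.span K (Set.range b) ≤ LinearMap.ker (qlin (K := K) y1) := by
        rw [Submodule.span_le]; rintro _ ⟨s, rfl⟩; exact hall s
      have h1 := Submodule.finrank_mono hle
      rw [finrank_span_eq_card hbli] at h1
      have h2 := qlin_ker_le (K := K) hy1ne
      simp only [Fintype.card_fin] at h1
      omega
    set lam := qlin (K := K) y1 (b 0) with hlam
    set κ : Fin n1 → K :=
      fun j => B.repr ⟨g1 j, Submodule.subset_span ⟨j, rfl⟩⟩ 0 with hκ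
    have hA : ∀ j, qlin (K := K) y1 (g1 j) = κ j • lam := by
      intro j
      have hmem : g1 j ∈ Submodule.span K (Set.range g1) := Submodule.subset_span ⟨j, rfl⟩
      have hgj : g1 j = ∑ s, B.repr ⟨g1 j, hmem⟩ s • b s := by
        have hw := (B.sum_repr ⟨g1 j, hmem⟩).symm
        have := congrArg ((Submodule.span K (Set.range g1)).subtype) hw
        rw [map_sum] at this
        exact this.trans (Finset.sum_congr rfl fun s _ => rfl)
      rw [hgj, map_sum]
      simp only [_root_.map_smul]
      rw [Finset.sum_eq_single (0 : Fin (t1' + 1))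
        (fun s _ hs => by rw [hvan s hs, smul_zero])
        (by simp)]
    have hexj0 : ∃ j0, κ j0 ≠ 0 := by
      by_contra hcon
      push_neg at hcon
      have hzero : ∀ v, ∀ hv : v ∈ Submodule.span K (Set.range g1),
          B.repr ⟨v, hv⟩ 0 = 0 := by
        intro v hv
        induction hv using Submodule.span_induction with
        | mem x hx =>
          obtain ⟨j, rfl⟩ := hx
          exact hcon j
        | zero =>
          show B.repr 0 0 = 0
          simp
        | add x z hx hz ihx ihz =>
          show B.repr (⟨x, hx⟩ + ⟨z, hz⟩) 0 = 0
          rw [map_add, Finsupp.add_apply, ihx, ihz, add_zero]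
        | smul a x hx ih =>
          show B.repr (a • ⟨x, hx⟩) 0 = 0
          rw [_root_.map_smul, Finsupp.smul_apply, ih, smul_zero]
      have h1 := hzero (B 0 : L) (B 0).2
      have h2 : (⟨(B 0 : L), (B 0).2⟩ : Submodule.span K (Set.range g1)) = B 0 := rfl
      rw [h2, B.repr_self, Finsupp.single_eq_same] at h1
      exact one_ne_zero h1
    -- second factor
    let Bm := Module.finBasisOfFinrankEq K L hm
    set u2 : Fin (k2 - 1) → L := fun s => Bm ⟨s.1, by have := s.isLt; omega⟩ with hu2
    obtain ⟨y2, hy2ne, hy2van⟩ := exists_qlin_vanish (K := K)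
      (show k2 - 1 < k2 by omega) u2
    have hker2_le := qlin_ker_le (K := K) hy2ne
    have hu2li : LinearIndependent K u2 := by
      have hinj : Function.Injective
          (fun s : Fin (k2 - 1) => (⟨s.1, by have := s.isLt; omega⟩ : Fin m)) := by
        intro a b' hab
        have hv : a.1 = b'.1 := by simpa using hab
        exact Fin.ext hv
      exact Bm.linearIndependent.comp _ hinj
    have hker2_ge : k2 - 1 ≤ Module.finrank K (LinearMap.ker (qlin (K := K) y2)) := by
      have hsp : Module.finrank K (Submodule.span K (Set.range u2)) = k2 - 1 := by
        rw [finrank_span_eq_card hu2li, Fintype.card_fin]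
      rw [← hsp]
      apply Submodule.finrank_mono
      rw [Submodule.span_le]
      rintro _ ⟨s, rfl⟩
      exact LinearMap.mem_ker.mpr (hy2van s)
    have hrn2 := LinearMap.finrank_range_add_finrank_ker (qlin (K := K) y2)
    rw [hm] at hrn2
    have hrange2 : Module.finrank K (LinearMap.range (qlin (K := K) y2)) = m - k2 + 1 := by
      omega
    have hexj2 : ∃ j2w, qlin (K := K) y2 (g2 j2w) ≠ 0 := by
      by_contra hcon
      push_neg at hcon
      have hle : (⊤ : Submodule K L) ≤ LinearMap.ker (qlin (K := K) y2) := by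
        rw [← hspan2, Submodule.span_le]
        rintro _ ⟨j, rfl⟩
        exact LinearMap.mem_ker.mpr (hcon j)
      have hmono := Submodule.finrank_mono hle
      rw [finrank_top, hm] at hmono
      omega
    obtain ⟨j0, hj0⟩ := hexj0
    obtain ⟨j2w, hj2w⟩ := hexj2
    refine ⟨fun j => qlin (K := K) y1 (g1 j.1) * qlin (K := K) y2 (g2 j.2),
      ⟨fun p => y1 p.1 * y2 p.2, ?_⟩, ?_, ?_⟩
    · funext ⟨ja, jb⟩
      show qlin (K := K) y1 (g1 ja) * qlin (K := K) y2 (g2 jb) = _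
      simp only [Matrix.vecMul, dotProduct, Fintype.sum_prod_type,
        Matrix.kroneckerMap_apply, moore, Matrix.of_apply, qlin_apply]
      rw [Finset.sum_mul_sum]
      exact Finset.sum_congr rfl fun i1 _ => Finset.sum_congr rfl fun i2 _ => by ring
    · intro h
      have hzz := congrFun h (j0, j2w)
      simp only [Pi.zero_apply] at hzz
      rw [hA j0] at hzz
      rcases mul_eq_zero.mp hzz with h1 | h2
      · rcases smul_eq_zero.mp h1 with h' | h'
        · exact hj0 h'
        · exact hb0 h'
      · exact hj2w h2
    · unfold rankWeight
      have hceq : ∀ j : Fin n1 × Fin n2,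
          qlin (K := K) y1 (g1 j.1) * qlin (K := K) y2 (g2 j.2)
            = κ j.1 • (lam * qlin (K := K) y2 (g2 j.2)) := by
        intro j; rw [hA j.1, smul_mul_assoc]
      have hspan_eq : Submodule.span K
          (Set.range fun j : Fin n1 × Fin n2 =>
            qlin (K := K) y1 (g1 j.1) * qlin (K := K) y2 (g2 j.2))
          = Submodule.span K
            (Set.range fun j2 : Fin n2 => lam * qlin (K := K) y2 (g2 j2)) := by
        apply le_antisymm
        · rw [Submodule.span_le]
          rintro _ ⟨j, rfl⟩
          show qlin (K := K) y1 (g1 j.1) * qlin (K := K) y2 (g2 j.2) ∈ _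
          rw [hceq j]
          exact Submodule.smul_mem _ _ (Submodule.subset_span ⟨j.2, rfl⟩)
        · rw [Submodule.span_le]
          rintro _ ⟨j2', rfl⟩
          show lam * qlin (K := K) y2 (g2 j2') ∈ _
          have hval : lam * qlin (K := K) y2 (g2 j2')
              = (κ j0)⁻¹ • (qlin (K := K) y1 (g1 j0) * qlin (K := K) y2 (g2 j2')) := by
            rw [hceq (j0, j2')]
            rw [smul_smul, inv_mul_cancel₀ hj0, one_smul]
          rw [hval]
          exact Submodule.smul_mem _ _ (Submodule.subset_span ⟨(j0, j2'), rfl⟩)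
      rw [hspan_eq]
      have hT2 : Submodule.span K
          (Set.range fun j2 : Fin n2 => lam * qlin (K := K) y2 (g2 j2))
          = Submodule.map (LinearMap.mulLeft K lam)
              (LinearMap.range (qlin (K := K) y2)) := by
        have hcomp : (fun j2 : Fin n2 => lam * qlin (K := K) y2 (g2 j2))
            = ((LinearMap.mulLeft K lam).comp (qlin (K := K) y2)) ∘ g2 := rfl
        rw [hcomp, Set.range_comp, Submodule.span_image, hspan2,
          Submodule.map_top, LinearMap.range_comp]
      rw [hT2]
      have hfr : Module.finrank K (Submodule.map (LinearMap.mulLeft K lam)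
            (LinearMap.range (qlin (K := K) y2)))
          = Module.finrank K (LinearMap.range (qlin (K := K) y2)) := by
        apply le_antisymm (Submodule.finrank_map_le _ _)
        have hid : Submodule.map (LinearMap.mulLeft K lam⁻¹)
            (Submodule.map (LinearMap.mulLeft K lam)
              (LinearMap.range (qlin (K := K) y2)))
            = LinearMap.range (qlin (K := K) y2) := by
          rw [← Submodule.map_comp, ← LinearMap.mulLeft_mul,
            inv_mul_cancel₀ hb0, LinearMap.mulLeft_one, Submodule.map_id]
        conv_lhs => rw [← hid]
        exact Submodule.finrank_map_le _ _
      rw [hfr, hrange2]
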